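/- Let x₀ ∈ ℂⁿ and let Ψ be holomorphic on an open neighborhood of (x₀, conj x₀) in ℂⁿ × ℂⁿ such that the ℂ-bilinear form (ξ,η) ↦ D²Ψ(x₀, conj x₀)((ξ,0),(0,η)) is nondegenerate. Define φ(y, x̃; x, ỹ) := Ψ(x, ỹ) − Ψ(x, x̃) − Ψ(y, ỹ) + Ψ(y, x̃). Then there exists an open neighborhood N of (x₀, conj x₀, x₀, conj x₀) in ℂ^{4n} such that for all (y, x̃, x, ỹ) ∈ N: the partial complex derivatives D_xφ(y, x̃; x, ỹ) and D_ỹφ(y, x̃; x, ỹ) both vanish if and only if x = y and ỹ = x̃; moreover φ(y, x̃; y, x̃) = 0, i.e. the unique critical point of (x,ỹ) ↦ φ(y,x̃;x,ỹ) is (y, x̃), with critical value 0. -/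

import Mathlib

open Complex

noncomputable section

/-- `ℂⁿ` with its Euclidean (Hermitian) norm. -/
abbrev En (n : ℕ) := EuclideanSpace ℂ (Fin n)

/-- Componentwise complex conjugation on `ℂⁿ`. -/
def conjV (n : ℕ) (x : En n) : En n :=
  (WithLp.equiv 2 (Fin n → ℂ)).symm fun j => (starRingEnd ℂ) (x j)

/-- The phase `φ(y, x̃; x, ỹ) = Ψ(x,ỹ) − Ψ(x,x̃) − Ψ(y,ỹ) + Ψ(y,x̃)`. -/
def phiF (n : ℕ) (Ψ : En n × En n → ℂ) (y xt x yt : En n) : ℂ :=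
  Ψ (x, yt) - Ψ (x, xt) - Ψ (y, yt) + Ψ (y, xt)

open Metric Real MeasureTheory

-- 1-D representation of deriv at center via circle integral
theorem oneD_repr {g : ℂ → ℂ} {r : ℝ} (hr : 0 < r)
    (hg : DifferentiableOn ℂ g (closedBall 0 r)) :
    deriv g 0 = (2 * ↑π * I)⁻¹ • ∮ ζ in C(0, r), (ζ - 0)⁻¹ ^ 1 • (ζ - 0)⁻¹ • g ζ := by
  lift r to NNReal using hr.le with R hR
  have hps : HasFPowerSeriesOnBall g (cauchyPowerSeries g 0 R) 0 R :=
    hg.hasFPowerSeriesOnBall (by exact_mod_cast hr)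
  have h1 : deriv g 0 = (cauchyPowerSeries g 0 R).coeff 1 := hps.hasFPowerSeriesAt.deriv
  rw [h1]
  show cauchyPowerSeries g 0 R 1 (fun _ => (1:ℂ)) = _
  rw [cauchyPowerSeries, ContinuousMultilinearMap.mkPiRing_apply]
  simp

-- 1-D Cauchy estimate
theorem oneD_bound {g : ℂ → ℂ} {r : ℝ} (hr : 0 < r)
    (hg : DifferentiableOn ℂ g (closedBall 0 r)) {M : ℝ}
    (hM : ∀ z ∈ closedBall (0:ℂ) r, ‖g z‖ ≤ M) :
    ‖deriv g 0‖ ≤ M / r := by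
  lift r to NNReal using hr.le with R hR
  have hrpos : (0:ℝ) < R := hr
  have hps : HasFPowerSeriesOnBall g (cauchyPowerSeries g 0 R) 0 R :=
    hg.hasFPowerSeriesOnBall (by exact_mod_cast hr)
  have h1 : deriv g 0 = (cauchyPowerSeries g 0 R).coeff 1 := hps.hasFPowerSeriesAt.deriv
  have hM0 : 0 ≤ M := le_trans (norm_nonneg _) (hM 0 (mem_closedBall_self hr.le))
  have h2 : ‖(cauchyPowerSeries g 0 R).coeff 1‖ ≤ ‖cauchyPowerSeries g 0 R 1‖ := by
    have h := (cauchyPowerSeries g 0 R 1).le_opNorm (fun _ => (1:ℂ))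
    have he : (∏ _i : Fin 1, ‖(1:ℂ)‖) = 1 := by simp
    rw [he, mul_one] at h
    exact h
  have h3 := norm_cauchyPowerSeries_le g 0 R 1
  have hcont : Continuous fun θ : ℝ => g (circleMap 0 R θ) := by
    apply hg.continuousOn.comp_continuous (continuous_circleMap 0 R)
    intro θ
    simpa using circleMap_mem_closedBall (0:ℂ) hrpos.le θ
  have h4 : (∫ θ : ℝ in (0)..2 * π, ‖g (circleMap 0 R θ)‖) ≤ 2 * π * M := by
    have : (∫ θ : ℝ in (0)..2 * π, ‖g (circleMap 0 R θ)‖) ≤ ∫ _ : ℝ in (0)..2 * π, M := by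
      apply intervalIntegral.integral_mono_on two_pi_pos.le
        (hcont.norm.intervalIntegrable _ _) (intervalIntegrable_const)
      intro θ _
      exact hM _ (by simpa using circleMap_mem_closedBall (0:ℂ) hrpos.le θ)
    simpa [two_pi_pos.le] using this
  rw [h1]
  refine h2.trans (h3.trans ?_)
  have hRabs : |(R:ℝ)| = R := abs_of_nonneg R.coe_nonneg
  rw [hRabs, pow_one]
  calc (2 * π)⁻¹ * (∫ θ : ℝ in (0)..2 * π, ‖g (circleMap 0 R θ)‖) * (R:ℝ)⁻¹
      ≤ (2 * π)⁻¹ * (2 * π * M) * (R:ℝ)⁻¹ := by gcongr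
      _ = M / R := by
        field_simp [Real.pi_ne_zero]

-- chain rule for slices
theorem slice_hasDerivAt {E : Type*} [NormedAddCommGroup E] [NormedSpace ℂ E]
    {f : E → ℂ} {z : E} (hfz : DifferentiableAt ℂ f z) (v : E) :
    HasDerivAt (fun lam : ℂ => f (z + lam • v)) (fderiv ℂ f z v) 0 := by
  have hα : HasDerivAt (fun lam : ℂ => z + lam • v) v 0 := by
    simpa using ((hasDerivAt_id (0:ℂ)).smul_const v).const_add z
  have h0 : z + (0:ℂ) • v = z := by simp
  have h2 : HasFDerivAt f (fderiv ℂ f z) (z + (0:ℂ) • v) := by rw [h0]; exact hfz.hasFDerivAt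
  exact h2.comp_hasDerivAt (0:ℂ) hα

set_option maxHeartbeats 1000000 in
/-- Core bootstrap: bound for first derivative. -/
theorem derivBound {E : Type*} [NormedAddCommGroup E] [NormedSpace ℂ E]
    {U : Set E} (hU : IsOpen U) {f : E → ℂ} (hf : DifferentiableOn ℂ f U)
    {z₁ : E} {ε M : ℝ} (hε : 0 < ε) (hball : closedBall z₁ ε ⊆ U)
    (hM : ∀ z ∈ closedBall z₁ ε, ‖f z‖ ≤ M) :
    ∀ z ∈ closedBall z₁ (ε/2), ∀ w : E, ‖fderiv ℂ f z w‖ ≤ (2*M/ε) * ‖w‖ := by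
  have hM0 : 0 ≤ M := le_trans (norm_nonneg _) (hM z₁ (mem_closedBall_self hε.le))
  intro z hz w
  rcases eq_or_ne w 0 with rfl | hw
  · simp
  have hwn : 0 < ‖w‖ := norm_pos_iff.2 hw
  set r : ℝ := (ε/2)/‖w‖ with hrdef
  have hr : 0 < r := by positivity
  have hrw : r * ‖w‖ = ε/2 := by rw [hrdef]; field_simp
  have hmemb : ∀ lam ∈ closedBall (0:ℂ) r, z + lam • w ∈ closedBall z₁ ε := by
    intro lam hlam
    rw [mem_closedBall] at hz hlam ⊢
    have h1 : dist (z + lam • w) z₁ ≤ ‖lam • w‖ + dist z z₁ := by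
      have : z + lam • w - z₁ = lam • w + (z - z₁) := by abel
      rw [dist_eq_norm, dist_eq_norm, this]
      exact norm_add_le _ _
    have h2 : ‖lam • w‖ ≤ r * ‖w‖ := by
      rw [norm_smul]
      have : ‖lam‖ ≤ r := by simpa [dist_eq_norm] using hlam
      exact mul_le_mul_of_nonneg_right this hwn.le
    nlinarith
  have hgd : DifferentiableOn ℂ (fun lam : ℂ => f (z + lam • w)) (closedBall 0 r) := by
    intro lam hlam
    apply DifferentiableAt.differentiableWithinAt
    have hin : z + lam • w ∈ U := hball (hmemb lam hlam)
    exact (hf.differentiableAt (hU.mem_nhds hin)).comp lam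
      ((differentiableAt_id.smul_const w).const_add z)
  have hbd : ∀ ζ ∈ closedBall (0:ℂ) r, ‖f (z + ζ • w)‖ ≤ M := fun ζ hζ => hM _ (hmemb ζ hζ)
  have hkey := oneD_bound hr hgd hbd
  have hzU : z ∈ U := hball (closedBall_subset_closedBall (half_le_self hε.le) hz)
  have hder := slice_hasDerivAt (hf.differentiableAt (hU.mem_nhds hzU)) w
  rw [← hder.deriv]
  have heq : M / r = (2*M/ε) * ‖w‖ := by
    rw [hrdef]
    field_simp
  rw [← heq]
  exact hkey

set_option maxHeartbeats 2000000 in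
/-- Core bootstrap: a directional derivative of a holomorphic function is holomorphic. -/
theorem lemA {E : Type*} [NormedAddCommGroup E] [NormedSpace ℂ E] [FiniteDimensional ℂ E]
    {U : Set E} (hU : IsOpen U) {f : E → ℂ} (hf : DifferentiableOn ℂ f U) (v : E) :
    DifferentiableOn ℂ (fun z => fderiv ℂ f z v) U := by
  intro z₁ hz₁
  apply DifferentiableAt.differentiableWithinAt
  obtain ⟨ε, hε, hball⟩ : ∃ ε > 0, closedBall z₁ ε ⊆ U :=
    (Metric.nhds_basis_closedBall.mem_iff).1 (hU.mem_nhds hz₁)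
  obtain ⟨M, hM⟩ := (isCompact_closedBall z₁ ε).exists_bound_of_continuousOn
    (hf.continuousOn.mono hball)
  have hM0 : 0 ≤ M := le_trans (norm_nonneg _) (hM z₁ (mem_closedBall_self hε.le))
  have hC := derivBound hU hf hε hball hM
  set r₀ : ℝ := ε/(4*(‖v‖+1)) with hr₀def
  have hr₀ : 0 < r₀ := by positivity
  have hrv : r₀ + r₀ * ‖v‖ ≤ ε/2 := by
    have h1 : r₀ * (1 + ‖v‖) ≤ ε / 4 := by
      rw [hr₀def]
      rw [div_mul_eq_mul_div, div_le_div_iff₀ (by positivity) (by norm_num)]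
      nlinarith [norm_nonneg v]
    nlinarith [norm_nonneg v]
  have hmemb : ∀ z ∈ ball z₁ r₀, ∀ lam ∈ closedBall (0:ℂ) r₀,
      z + lam • v ∈ closedBall z₁ (ε/2) := by
    intro z hz lam hlam
    rw [mem_ball] at hz
    rw [mem_closedBall] at hlam ⊢
    have h1 : dist (z + lam • v) z₁ ≤ ‖lam • v‖ + dist z z₁ := by
      have : z + lam • v - z₁ = lam • v + (z - z₁) := by abel
      rw [dist_eq_norm, dist_eq_norm, this]
      exact norm_add_le _ _
    have h2 : ‖lam • v‖ ≤ r₀ * ‖v‖ := by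
      rw [norm_smul]
      have : ‖lam‖ ≤ r₀ := by simpa [dist_eq_norm] using hlam
      exact mul_le_mul_of_nonneg_right this (norm_nonneg v)
    nlinarith
  have hhalf : closedBall z₁ (ε/2) ⊆ U :=
    fun p hp => hball (closedBall_subset_closedBall (half_le_self hε.le) hp)
  -- the integrand
  set c : ℝ → ℂ := fun θ =>
    (circleMap 0 r₀ θ * I) * ((circleMap 0 r₀ θ)⁻¹ * (circleMap 0 r₀ θ)⁻¹) with hcdef
  set F : E → ℝ → ℂ := fun z θ => c θ * f (z + circleMap 0 r₀ θ • v) with hFdef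
  set Fd : E → ℝ → (E →L[ℂ] ℂ) :=
    fun z θ => c θ • fderiv ℂ f (z + circleMap 0 r₀ θ • v) with hFddef
  have hcirc_mem : ∀ (θ : ℝ), (circleMap 0 r₀ θ : ℂ) ∈ closedBall (0:ℂ) r₀ := by
    intro θ
    simpa using circleMap_mem_closedBall (0:ℂ) hr₀.le θ
  have hcne : ∀ θ : ℝ, circleMap 0 r₀ θ ≠ 0 := fun θ => circleMap_ne_center hr₀.ne'
  have hccont : Continuous c := by
    apply Continuous.mul
    · exact (continuous_circleMap 0 r₀).mul continuous_const
    · exact (((continuous_circleMap 0 r₀).inv₀ hcne).mul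
        ((continuous_circleMap 0 r₀).inv₀ hcne))
  have hpath_mem : ∀ z ∈ ball z₁ r₀, ∀ θ : ℝ, z + circleMap 0 r₀ θ • v ∈ U :=
    fun z hz θ => hhalf (hmemb z hz _ (hcirc_mem θ))
  have hFcont : ∀ z ∈ ball z₁ r₀, Continuous (F z) := by
    intro z hz
    apply hccont.mul
    apply (hf.continuousOn.mono hhalf).comp_continuous
      (continuous_const.add ((continuous_circleMap 0 r₀).smul continuous_const))
    exact fun θ => hmemb z hz _ (hcirc_mem θ)
  -- representation
  have hFrep : ∀ z ∈ ball z₁ r₀,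
      fderiv ℂ f z v = (2 * ↑π * I)⁻¹ • ∫ θ in (0:ℝ)..(2*π), F z θ := by
    intro z hz
    have hgd : DifferentiableOn ℂ (fun lam : ℂ => f (z + lam • v)) (closedBall 0 r₀) := by
      intro lam hlam
      apply DifferentiableAt.differentiableWithinAt
      exact (hf.differentiableAt (hU.mem_nhds (hhalf (hmemb z hz lam hlam)))).comp lam
        ((differentiableAt_id.smul_const v).const_add z)
    have h2 := (slice_hasDerivAt (hf.differentiableAt (hU.mem_nhds
      (hhalf (hmemb z hz 0 (mem_closedBall_self hr₀.le))))) v).deriv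
    simp only [zero_smul, add_zero] at h2
    rw [← h2, oneD_repr hr₀ hgd, circleIntegral]
    congr 1
    apply intervalIntegral.integral_congr
    intro θ _
    simp only [deriv_circleMap, smul_eq_mul, sub_zero, pow_one, hFdef, hcdef]
    ring
  -- differentiation under the integral sign
  have hkey : HasFDerivAt (fun z => ∫ θ in (0:ℝ)..(2*π), F z θ)
      (∫ θ in (0:ℝ)..(2*π), Fd z₁ θ) z₁ := by
    borelize E
    borelize (E →L[ℂ] ℂ)
    apply intervalIntegral.hasFDerivAt_integral_of_dominated_of_fderiv_le
      (hs := ball_mem_nhds z₁ hr₀) (bound := fun _ => r₀⁻¹ * (2*M/ε))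
    · filter_upwards [ball_mem_nhds z₁ hr₀] with z hz
      exact (hFcont z hz).aestronglyMeasurable
    · exact ((hFcont z₁ (mem_ball_self hr₀)).intervalIntegrable _ _)
    · apply MeasureTheory.AEStronglyMeasurable.smul hccont.aestronglyMeasurable
      have hpm : Measurable fun θ : ℝ => z₁ + circleMap 0 r₀ θ • v :=
        (continuous_const.add ((continuous_circleMap 0 r₀).smul continuous_const)).measurable
      exact ((measurable_fderiv ℂ f).comp hpm).aestronglyMeasurable
    · apply Filter.Eventually.of_forall
      intro θ _ z hz
      have hnorm_c : ‖c θ‖ = r₀⁻¹ := by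
        simp only [hcdef, norm_mul, norm_inv, norm_circleMap_zero, Complex.norm_I,
          _root_.abs_of_pos hr₀]
        field_simp
      have hop : ‖fderiv ℂ f (z + circleMap 0 r₀ θ • v)‖ ≤ 2*M/ε := by
        apply ContinuousLinearMap.opNorm_le_bound _ (by positivity)
        exact fun w => hC _ (hmemb z hz _ (hcirc_mem θ)) w
      calc ‖Fd z θ‖ ≤ ‖c θ‖ * ‖fderiv ℂ f (z + circleMap 0 r₀ θ • v)‖ :=
            ContinuousLinearMap.opNorm_smul_le _ _
        _ ≤ r₀⁻¹ * (2*M/ε) := by rw [hnorm_c]; gcongr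
    · exact intervalIntegrable_const
    · apply Filter.Eventually.of_forall
      intro θ _ z hz
      have ht : HasFDerivAt (fun z : E => z + circleMap 0 r₀ θ • v)
          (ContinuousLinearMap.id ℂ E) z := (hasFDerivAt_id z).add_const _
      have hq : HasFDerivAt (fun z : E => f (z + circleMap 0 r₀ θ • v))
          (fderiv ℂ f (z + circleMap 0 r₀ θ • v)) z := by
        have := ((hf.differentiableAt (hU.mem_nhds (hpath_mem z hz θ))).hasFDerivAt).comp z ht
        exact this
      exact hq.const_mul (c θ)
  have hrep2 : (fun z => fderiv ℂ f z v) =ᶠ[nhds z₁]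
      (fun z => (2 * ↑π * I)⁻¹ • ∫ θ in (0:ℝ)..(2*π), F z θ) :=
    Filter.eventuallyEq_of_mem (ball_mem_nhds z₁ hr₀) hFrep
  have hd2 : DifferentiableAt ℂ
      (fun z => (2 * ↑π * I)⁻¹ • ∫ θ in (0:ℝ)..(2*π), F z θ) z₁ :=
    hkey.differentiableAt.fun_const_smul _
  exact hd2.congr_of_eventuallyEq hrep2

section LemB
variable {E : Type*} [NormedAddCommGroup E] [NormedSpace ℂ E] [FiniteDimensional ℂ E]

/-- The coordinate equivalence for the dual. -/
noncomputable def dualCoord (E : Type*) [NormedAddCommGroup E] [NormedSpace ℂ E]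
    [FiniteDimensional ℂ E] [Fintype (Module.Basis.ofVectorSpaceIndex ℂ E)]
    [DecidableEq (Module.Basis.ofVectorSpaceIndex ℂ E)] :
    (E →L[ℂ] ℂ) ≃L[ℂ] (Module.Basis.ofVectorSpaceIndex ℂ E → ℂ) :=
  ((Module.Basis.ofVectorSpace ℂ E).equivFun.toContinuousLinearEquiv.arrowCongr
    (ContinuousLinearEquiv.refl ℂ ℂ)).trans
    (ContinuousLinearEquiv.piRing (Module.Basis.ofVectorSpaceIndex ℂ E))

theorem dualCoord_apply [Fintype (Module.Basis.ofVectorSpaceIndex ℂ E)]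
    [DecidableEq (Module.Basis.ofVectorSpaceIndex ℂ E)] (L : E →L[ℂ] ℂ)
    (i : Module.Basis.ofVectorSpaceIndex ℂ E) :
    dualCoord E L i =
      L ((Module.Basis.ofVectorSpace ℂ E).equivFun.toContinuousLinearEquiv.symm (Pi.single i 1)) := by
  rfl

theorem lemB {U : Set E} (hU : IsOpen U) {f : E → ℂ} (hf : DifferentiableOn ℂ f U) :
    DifferentiableOn ℂ (fderiv ℂ f) U := by
  haveI : Fintype (Module.Basis.ofVectorSpaceIndex ℂ E) := FiniteDimensional.fintypeBasisIndex
    (Module.Basis.ofVectorSpace ℂ E)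
  haveI : DecidableEq (Module.Basis.ofVectorSpaceIndex ℂ E) := Classical.decEq _
  set w : Module.Basis.ofVectorSpaceIndex ℂ E → E := fun i =>
    (Module.Basis.ofVectorSpace ℂ E).equivFun.toContinuousLinearEquiv.symm (Pi.single i 1) with hw
  have key : ∀ z, fderiv ℂ f z = (dualCoord E).symm (fun i => fderiv ℂ f z (w i)) := by
    intro z
    have : (fun i => fderiv ℂ f z (w i)) = dualCoord E (fderiv ℂ f z) := by
      funext i
      rw [dualCoord_apply]
    rw [this, ContinuousLinearEquiv.symm_apply_apply]
  have h1 : DifferentiableOn ℂ (fun z => (fun i => fderiv ℂ f z (w i))) U :=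
    differentiableOn_pi.2 fun i => lemA hU hf (w i)
  have h2 : DifferentiableOn ℂ (fun z => (dualCoord E).symm (fun i => fderiv ℂ f z (w i))) U :=
    (dualCoord E).symm.toContinuousLinearMap.differentiable.comp_differentiableOn h1
  exact h2.congr fun z _ => key z

theorem lemC {U : Set E} (hU : IsOpen U) {f : E → ℂ} (hf : DifferentiableOn ℂ f U)
    {z₀ : E} (hz₀ : z₀ ∈ U) : HasStrictFDerivAt f (fderiv ℂ f z₀) z₀ := by
  apply hasStrictFDerivAt_of_hasFDerivAt_of_continuousAt
  · filter_upwards [hU.mem_nhds hz₀] with z hz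
    exact (hf.differentiableAt (hU.mem_nhds hz)).hasFDerivAt
  · exact ((lemB hU hf).continuousOn.continuousAt (hU.mem_nhds hz₀))

end LemB

set_option maxHeartbeats 2000000 in
/-- near `(x₀, conj x₀, x₀, conj x₀)` the partial derivatives of the phase
`φ(y, x̃; x, ỹ)` in `(x, ỹ)` vanish precisely when `x = y` and `ỹ = x̃`; i.e. the unique
critical point of `(x,ỹ) ↦ φ(y,x̃;x,ỹ)` is `(y, x̃)`, with critical value `0`. -/
theorem statement10 (n : ℕ)
    (x₀ : En n) (U : Set (En n × En n)) (hU : IsOpen U) (hmem : (x₀, conjV n x₀) ∈ U)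
    (Ψ : En n × En n → ℂ) (hΨ : DifferentiableOn ℂ Ψ U)
    (hnd : ∀ ξ : En n,
      (∀ η : En n, fderiv ℂ (fderiv ℂ Ψ) (x₀, conjV n x₀) (ξ, 0) (0, η) = 0) → ξ = 0) :
    ∃ N : Set (En n × En n × En n × En n), IsOpen N ∧
      (x₀, conjV n x₀, x₀, conjV n x₀) ∈ N ∧
      ∀ y xt x yt : En n, (y, xt, x, yt) ∈ N →
        ((fderiv ℂ (fun x' => phiF n Ψ y xt x' yt) x = 0 ∧
          fderiv ℂ (fun yt' => phiF n Ψ y xt x yt') yt = 0) ↔ (x = y ∧ yt = xt)) ∧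
        phiF n Ψ y xt y xt = 0 := by
  classical
  set z₀ : En n × En n := (x₀, conjV n x₀) with hz₀
  set A := fderiv ℂ (fderiv ℂ Ψ) z₀ with hA
  have hg : DifferentiableOn ℂ (fderiv ℂ Ψ) U := lemB hU hΨ
  have hgz₀ : DifferentiableAt ℂ (fderiv ℂ Ψ) z₀ := hg.differentiableAt (hU.mem_nhds hmem)
  have hsymm : ∀ p q, A p q = A q p := by
    intro p q
    apply second_derivative_symmetric_of_eventually (f := Ψ) ?hev hgz₀.hasFDerivAt p q
    case hev =>
      filter_upwards [hU.mem_nhds hmem] with z hz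
      exact (hΨ.differentiableAt (hU.mem_nhds hz)).hasFDerivAt
  -- right nondegeneracy from left nondegeneracy
  have hnd' : ∀ η : En n, (∀ w : En n, A (w, 0) (0, η) = 0) → η = 0 := by
    intro η hη
    have hadd1 : ∀ (m₁ m₂ : En n), ((m₁ + m₂ : En n), (0:En n)) = (m₁, 0) + (m₂, 0) := by
      intro m₁ m₂; rw [Prod.mk_add_mk, add_zero]
    have hsmul1 : ∀ (cc : ℂ) (m : En n), ((cc • m : En n), (0:En n)) = cc • (m, 0) := by
      intro cc m; rw [Prod.smul_mk, smul_zero]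
    have hadd2 : ∀ (m₁ m₂ : En n), ((0:En n), m₁ + m₂) = ((0:En n), m₁) + ((0:En n), m₂) := by
      intro m₁ m₂; rw [Prod.mk_add_mk, add_zero]
    have hsmul2 : ∀ (cc : ℂ) (m : En n), ((0:En n), (cc • m : En n)) = cc • ((0:En n), m) := by
      intro cc m; rw [Prod.smul_mk, smul_zero]
    set T : En n →ₗ[ℂ] (En n →ₗ[ℂ] ℂ) := LinearMap.mk₂ ℂ (fun ξ μ => A (ξ, 0) (0, μ))
      (fun m₁ m₂ nn => by rw [hadd1, map_add, ContinuousLinearMap.add_apply])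
      (fun cc m nn => by rw [hsmul1, _root_.map_smul, ContinuousLinearMap.smul_apply])
      (fun m n₁ n₂ => by rw [hadd2, map_add])
      (fun cc m nn => by rw [hsmul2, _root_.map_smul]) with hT
    have hTinj : Function.Injective T := by
      rw [← LinearMap.ker_eq_bot, LinearMap.ker_eq_bot']
      intro ξ hξ
      exact hnd ξ fun μ => LinearMap.ext_iff.1 hξ μ
    have hfr : Module.finrank ℂ (En n) = Module.finrank ℂ (En n →ₗ[ℂ] ℂ) := by
      rw [Module.finrank_linearMap, Module.finrank_self, mul_one]
    have hTsurj := (LinearMap.injective_iff_surjective_of_finrank_eq_finrank hfr).1 hTinj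
    have hdual : ∀ φ : Module.Dual ℂ (En n), φ η = 0 := by
      intro φ
      obtain ⟨wφ, rfl⟩ := hTsurj φ
      exact hη wφ
    exact (Module.forall_dual_apply_eq_zero_iff ℂ η).1 hdual
  -- coordinates
  haveI : Fintype (Module.Basis.ofVectorSpaceIndex ℂ (En n)) :=
    FiniteDimensional.fintypeBasisIndex (Module.Basis.ofVectorSpace ℂ (En n))
  set b : Module.Basis (Module.Basis.ofVectorSpaceIndex ℂ (En n)) ℂ (En n) := Module.Basis.ofVectorSpace ℂ (En n)
    with hb
  set ψ : (Module.Basis.ofVectorSpaceIndex ℂ (En n)) → (En n × En n) → ℂ :=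
    fun i p => fderiv ℂ Ψ p ((b i : En n), (0 : En n)) with hψ
  set χ : (Module.Basis.ofVectorSpaceIndex ℂ (En n)) → (En n × En n) → ℂ :=
    fun i p => fderiv ℂ Ψ p ((0 : En n), (b i : En n)) with hχ
  have hψd : ∀ i, DifferentiableOn ℂ (ψ i) U := fun i => lemA hU hΨ _
  have hχd : ∀ i, DifferentiableOn ℂ (χ i) U := fun i => lemA hU hΨ _
  have hψs : ∀ i, HasStrictFDerivAt (ψ i) (fderiv ℂ (ψ i) z₀) z₀ :=
    fun i => lemC hU (hψd i) hmem
  have hχs : ∀ i, HasStrictFDerivAt (χ i) (fderiv ℂ (χ i) z₀) z₀ :=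
    fun i => lemC hU (hχd i) hmem
  have hψf : ∀ i w, fderiv ℂ (ψ i) z₀ w = A w ((b i : En n), 0) := by
    intro i w
    have h1 : HasFDerivAt (ψ i)
        ((ContinuousLinearMap.apply ℂ ℂ ((b i : En n), (0 : En n))).comp A) z₀ :=
      ((ContinuousLinearMap.apply ℂ ℂ ((b i : En n), (0 : En n))).hasFDerivAt).comp z₀
        hgz₀.hasFDerivAt
    rw [h1.fderiv]
    rfl
  have hχf : ∀ i w, fderiv ℂ (χ i) z₀ w = A w (0, (b i : En n)) := by
    intro i w
    have h1 : HasFDerivAt (χ i)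
        ((ContinuousLinearMap.apply ℂ ℂ ((0 : En n), (b i : En n))).comp A) z₀ :=
      ((ContinuousLinearMap.apply ℂ ℂ ((0 : En n), (b i : En n))).hasFDerivAt).comp z₀
        hgz₀.hasFDerivAt
    rw [h1.fderiv]
    rfl
  -- the two localizing maps
  set Fm : (En n × En n) → (En n) × ((Module.Basis.ofVectorSpaceIndex ℂ (En n)) → ℂ) :=
    fun p => (p.1, fun i => ψ i p) with hFm
  set Gm : (En n × En n) → (En n) × ((Module.Basis.ofVectorSpaceIndex ℂ (En n)) → ℂ) :=
    fun p => (p.2, fun i => χ i p) with hGm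
  set LF : (En n × En n) →L[ℂ] (En n) × ((Module.Basis.ofVectorSpaceIndex ℂ (En n)) → ℂ) :=
    (ContinuousLinearMap.fst ℂ (En n) (En n)).prod
      (ContinuousLinearMap.pi fun i => fderiv ℂ (ψ i) z₀) with hLF
  set LG : (En n × En n) →L[ℂ] (En n) × ((Module.Basis.ofVectorSpaceIndex ℂ (En n)) → ℂ) :=
    (ContinuousLinearMap.snd ℂ (En n) (En n)).prod
      (ContinuousLinearMap.pi fun i => fderiv ℂ (χ i) z₀) with hLG
  have hFs : HasStrictFDerivAt Fm LF z₀ := by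
    apply HasStrictFDerivAt.prodMk
    · exact hasStrictFDerivAt_fst
    · apply hasStrictFDerivAt_pi''
      intro i
      rw [ContinuousLinearMap.proj_pi]
      exact hψs i
  have hGs : HasStrictFDerivAt Gm LG z₀ := by
    apply HasStrictFDerivAt.prodMk
    · exact hasStrictFDerivAt_snd
    · apply hasStrictFDerivAt_pi''
      intro i
      rw [ContinuousLinearMap.proj_pi]
      exact hχs i
  -- injectivity of the derivatives
  have hLFinj : Function.Injective LF := by
    have h0 : ∀ p : En n × En n, LF p = 0 → p = 0 := by
      rintro ⟨ξ, η⟩ hp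
      rw [Prod.ext_iff] at hp
      obtain ⟨h1, h2⟩ := hp
      have hξ : ξ = 0 := by simpa [hLF] using h1
      subst hξ
      have hco : ∀ i, A (0, η) ((b i : En n), 0) = 0 := by
        intro i
        have h3 := congrFun h2 i
        simpa [hLF, hψf] using h3
      have hall : ∀ wv : En n, A (0, η) (wv, 0) = 0 := by
        intro wv
        set ℓ : En n →L[ℂ] ℂ :=
          (A ((0 : En n), η)).comp (ContinuousLinearMap.inl ℂ (En n) (En n)) with hℓdef
        have hℓ : (ℓ : En n →ₗ[ℂ] ℂ) = 0 := b.ext fun i => by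
          simpa [hℓdef] using hco i
        have h4 := LinearMap.congr_fun hℓ wv
        simpa [hℓdef] using h4
      have hη0 : η = 0 := hnd' η fun w => (hsymm _ _).trans (hall w)
      rw [hη0]
      rfl
    intro p q hpq
    have h5 := h0 (p - q) (by rw [map_sub, hpq, sub_self])
    rwa [sub_eq_zero] at h5
  have hLGinj : Function.Injective LG := by
    have h0 : ∀ p : En n × En n, LG p = 0 → p = 0 := by
      rintro ⟨ξ, η⟩ hp
      rw [Prod.ext_iff] at hp
      obtain ⟨h1, h2⟩ := hp
      have hη : η = 0 := by simpa [hLG] using h1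
      subst hη
      have hco : ∀ i, A (ξ, 0) (0, (b i : En n)) = 0 := by
        intro i
        have h3 := congrFun h2 i
        simpa [hLG, hχf] using h3
      have hall : ∀ wv : En n, A (ξ, 0) (0, wv) = 0 := by
        intro wv
        set ℓ : En n →L[ℂ] ℂ :=
          (A (ξ, (0 : En n))).comp (ContinuousLinearMap.inr ℂ (En n) (En n)) with hℓdef
        have hℓ : (ℓ : En n →ₗ[ℂ] ℂ) = 0 := b.ext fun i => by
          simpa [hℓdef] using hco i
        have h4 := LinearMap.congr_fun hℓ wv
        simpa [hℓdef] using h4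
      have hξ0 : ξ = 0 := hnd ξ hall
      rw [hξ0]
      rfl
    intro p q hpq
    have h5 := h0 (p - q) (by rw [map_sub, hpq, sub_self])
    rwa [sub_eq_zero] at h5
  -- upgrade to continuous linear equivs
  have hfr2 : Module.finrank ℂ (En n × En n) =
      Module.finrank ℂ ((En n) × ((Module.Basis.ofVectorSpaceIndex ℂ (En n)) → ℂ)) := by
    rw [Module.finrank_prod, Module.finrank_prod, Module.finrank_pi,
      ← Module.finrank_eq_card_basis b]
  have hLFbij : Function.Bijective (LF : (En n × En n) →ₗ[ℂ] _) :=
    ⟨hLFinj, (LinearMap.injective_iff_surjective_of_finrank_eq_finrank hfr2).1 hLFinj⟩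
  have hLGbij : Function.Bijective (LG : (En n × En n) →ₗ[ℂ] _) :=
    ⟨hLGinj, (LinearMap.injective_iff_surjective_of_finrank_eq_finrank hfr2).1 hLGinj⟩
  set eF := LinearEquiv.toContinuousLinearEquiv (LinearEquiv.ofBijective _ hLFbij) with heF
  set eG := LinearEquiv.toContinuousLinearEquiv (LinearEquiv.ofBijective _ hLGbij) with heG
  have heFc : (eF : (En n × En n) →L[ℂ] (En n) × ((Module.Basis.ofVectorSpaceIndex ℂ (En n)) → ℂ))
      = LF := by apply ContinuousLinearMap.ext; intro p; rfl
  have heGc : (eG : (En n × En n) →L[ℂ] (En n) × ((Module.Basis.ofVectorSpaceIndex ℂ (En n)) → ℂ))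
      = LG := by apply ContinuousLinearMap.ext; intro p; rfl
  have hFs' : HasStrictFDerivAt Fm
      ((eF : (En n × En n) →L[ℂ] (En n) × ((Module.Basis.ofVectorSpaceIndex ℂ (En n)) → ℂ))) z₀ := by
    rw [heFc]; exact hFs
  have hGs' : HasStrictFDerivAt Gm
      ((eG : (En n × En n) →L[ℂ] (En n) × ((Module.Basis.ofVectorSpaceIndex ℂ (En n)) → ℂ))) z₀ := by
    rw [heGc]; exact hGs
  -- local injectivity
  set PF := hFs'.toOpenPartialHomeomorph Fm with hPF
  set PG := hGs'.toOpenPartialHomeomorph Gm with hPG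
  set S : Set (En n × En n) := U ∩ PF.source ∩ PG.source with hS
  have hSopen : IsOpen S := (hU.inter PF.open_source).inter PG.open_source
  have hSmem : z₀ ∈ S :=
    ⟨⟨hmem, hFs'.mem_toOpenPartialHomeomorph_source⟩, hGs'.mem_toOpenPartialHomeomorph_source⟩
  -- the neighborhood
  refine ⟨{p : En n × En n × En n × En n | (p.2.2.1, p.2.2.2) ∈ S ∧ (p.2.2.1, p.2.1) ∈ S ∧
    (p.1, p.2.2.2) ∈ S ∧ (p.1, p.2.1) ∈ S}, ?_, ?_, ?_⟩
  · apply IsOpen.inter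
    · exact hSopen.preimage (by fun_prop)
    · apply IsOpen.inter
      · exact hSopen.preimage (by fun_prop)
      · exact IsOpen.inter (hSopen.preimage (by fun_prop)) (hSopen.preimage (by fun_prop))
  · exact ⟨hSmem, hSmem, hSmem, hSmem⟩
  · rintro y xt x yt ⟨hxyt, hxxt, hyyt, hyxt⟩
    have hUxyt : (x, yt) ∈ U := hxyt.1.1
    have hUxxt : (x, xt) ∈ U := hxxt.1.1
    have hUyyt : (y, yt) ∈ U := hyyt.1.1
    have hUyxt : (y, xt) ∈ U := hyxt.1.1
    have hdxyt : DifferentiableAt ℂ Ψ (x, yt) := hΨ.differentiableAt (hU.mem_nhds hUxyt)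
    have hdxxt : DifferentiableAt ℂ Ψ (x, xt) := hΨ.differentiableAt (hU.mem_nhds hUxxt)
    have hdyyt : DifferentiableAt ℂ Ψ (y, yt) := hΨ.differentiableAt (hU.mem_nhds hUyyt)
    constructor
    · constructor
      · rintro ⟨h1, h2⟩
        -- the x-slice
        have hx1 : HasFDerivAt (fun x' => Ψ (x', yt))
            ((fderiv ℂ Ψ (x, yt)).comp (ContinuousLinearMap.inl ℂ (En n) (En n))) x :=
          hdxyt.hasFDerivAt.comp x (hasFDerivAt_prodMk_left x yt)
        have hx2 : HasFDerivAt (fun x' => Ψ (x', xt))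
            ((fderiv ℂ Ψ (x, xt)).comp (ContinuousLinearMap.inl ℂ (En n) (En n))) x :=
          hdxxt.hasFDerivAt.comp x (hasFDerivAt_prodMk_left x xt)
        have hphix : HasFDerivAt (fun x' => phiF n Ψ y xt x' yt)
            ((fderiv ℂ Ψ (x, yt)).comp (ContinuousLinearMap.inl ℂ (En n) (En n)) -
              (fderiv ℂ Ψ (x, xt)).comp (ContinuousLinearMap.inl ℂ (En n) (En n))) x := by
          have := ((hx1.sub hx2).sub_const (Ψ (y, yt))).add_const (Ψ (y, xt))
          exact this
        rw [hphix.fderiv, sub_eq_zero] at h1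
        -- the yt-slice
        have hy1 : HasFDerivAt (fun yt' => Ψ (x, yt'))
            ((fderiv ℂ Ψ (x, yt)).comp (ContinuousLinearMap.inr ℂ (En n) (En n))) yt :=
          hdxyt.hasFDerivAt.comp yt (hasFDerivAt_prodMk_right x yt)
        have hy3 : HasFDerivAt (fun yt' => Ψ (y, yt'))
            ((fderiv ℂ Ψ (y, yt)).comp (ContinuousLinearMap.inr ℂ (En n) (En n))) yt :=
          hdyyt.hasFDerivAt.comp yt (hasFDerivAt_prodMk_right y yt)
        have hphiy : HasFDerivAt (fun yt' => phiF n Ψ y xt x yt')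
            ((fderiv ℂ Ψ (x, yt)).comp (ContinuousLinearMap.inr ℂ (En n) (En n)) -
              (fderiv ℂ Ψ (y, yt)).comp (ContinuousLinearMap.inr ℂ (En n) (En n))) yt := by
          have := (((hy1.sub_const (Ψ (x, xt))).sub hy3).add_const (Ψ (y, xt)))
          exact this
        rw [hphiy.fderiv, sub_eq_zero] at h2
        -- conclude with injectivity
        have hFeq : Fm (x, yt) = Fm (x, xt) := by
          rw [hFm]
          refine Prod.ext rfl ?_
          funext i
          have := ContinuousLinearMap.ext_iff.1 h1 (b i)
          simpa [hψ] using this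
        have hGeq : Gm (x, yt) = Gm (y, yt) := by
          rw [hGm]
          refine Prod.ext rfl ?_
          funext i
          have := ContinuousLinearMap.ext_iff.1 h2 (b i)
          simpa [hχ] using this
        have he1 : (x, yt) = (x, xt) := PF.injOn hxyt.1.2 hxxt.1.2 hFeq
        have he2 : (x, yt) = (y, yt) := PG.injOn hxyt.2 hyyt.2 hGeq
        exact ⟨(congrArg Prod.fst he2 : _), (congrArg Prod.snd he1 : _)⟩
      · rintro ⟨h1', h2'⟩
        constructor
        · rw [h1', h2']
          have hc : (fun x' => phiF n Ψ y xt x' xt) = fun _ => (0:ℂ) := by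
            funext x'
            simp only [phiF]
            ring
          rw [hc]
          exact fderiv_const_apply 0
        · rw [h1', h2']
          have hc : (fun yt' => phiF n Ψ y xt y yt') = fun _ => (0:ℂ) := by
            funext yt'
            simp only [phiF]
            ring
          rw [hc]
          exact fderiv_const_apply 0
    · simp only [phiF]
      ring

end
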